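/- Let b ∈ ℝ^d with b_1 ≥ b_2 ≥ ⋯ ≥ b_d, set S_i := b_1 + ⋯ + b_i (with S_0 = 0), and use conventions b_0 = +∞, b_{d+1} = −∞, S_{d+1} = S_d. Then there exists exactly one index k ∈ {0,1,…,d} such that b_k ≥ S_k/(k+1) and b_{k+1} < S_{k+1}/(k+2). -/

import Mathlib

open Finset

theorem stmt5 (d : ℕ) (hd : 0 < d) (b : ℕ → ℝ)
    (hb : ∀ i j, 1 ≤ i → i ≤ j → j ≤ d → b j ≤ b i) :
    ∃! k : ℕ, k ≤ d ∧
      (k = 0 ∨ (∑ i ∈ Finset.Icc 1 k, b i) / ((k : ℝ) + 1) ≤ b k) ∧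
      (k = d ∨ b (k + 1) < (∑ i ∈ Finset.Icc 1 (k + 1), b i) / ((k : ℝ) + 2)) := by
  classical
  set Q : ℕ → Prop := fun k => (∑ i ∈ Finset.Icc 1 k, b i) ≤ ((k:ℝ)+1) * b k with hQ
  have hpos : ∀ m : ℕ, (0:ℝ) < (m:ℝ) + 1 := by intro m; positivity
  have hdiv : ∀ m : ℕ, ((∑ i ∈ Finset.Icc 1 m, b i) / ((m : ℝ) + 1) ≤ b m ↔ Q m) := by
    intro m
    rw [div_le_iff₀ (hpos m)]
    constructor <;> intro h <;> linarith
  have hdiv2 : ∀ m : ℕ,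
      (b (m + 1) < (∑ i ∈ Finset.Icc 1 (m + 1), b i) / ((m : ℝ) + 2) ↔ ¬ Q (m+1)) := by
    intro m
    have h2 : (0:ℝ) < (m:ℝ) + 2 := by positivity
    rw [lt_div_iff₀ h2, hQ]
    simp only [not_le]
    push_cast
    constructor <;> intro h <;> nlinarith
  have hL : ∀ k, k ≤ d → Q k → ∀ j, 1 ≤ j → j ≤ k → Q j := by
    intro k
    induction k with
    | zero => intro _ _ j hj1 hj2; omega
    | succ n ih =>
      intro hkd hQk j hj1 hj2
      rcases eq_or_lt_of_le hj2 with rfl | hlt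
      · exact hQk
      · have hjn : j ≤ n := by omega
        have hn1 : 1 ≤ n := le_trans hj1 hjn
        have hQn : Q n := by
          have hsum : (∑ i ∈ Finset.Icc 1 (n+1), b i)
              = (∑ i ∈ Finset.Icc 1 n, b i) + b (n+1) :=
            Finset.sum_Icc_succ_top (by omega) b
          have hb' : b (n+1) ≤ b n := hb n (n+1) hn1 (by omega) hkd
          simp only [hQ] at hQk ⊢
          rw [hsum] at hQk
          push_cast at hQk ⊢
          have hc : (0:ℝ) ≤ (n:ℝ) + 1 := by positivity
          nlinarith [hQk, hb', hc]
        exact ih (by omega) hQn j hj1 hjn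
  set P : ℕ → Prop := fun k => k = 0 ∨ Q k with hP
  haveI : DecidablePred P := Classical.decPred P
  set k := Nat.findGreatest P d with hk
  have hP0 : P 0 := Or.inl rfl
  have hPk : P k := Nat.findGreatest_spec (Nat.zero_le d) hP0
  have hkd : k ≤ d := Nat.findGreatest_le d
  refine ⟨k, ⟨hkd, ?_, ?_⟩, ?_⟩
  · rcases hPk with h0 | hq
    · exact Or.inl h0
    · exact Or.inr ((hdiv k).mpr hq)
  · rcases eq_or_lt_of_le hkd with heq | hlt
    · exact Or.inl heq
    · right
      have hnot : ¬ P (k+1) :=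
        Nat.findGreatest_is_greatest (Nat.lt_succ_self k) (Nat.succ_le_of_lt hlt)
      have hnq : ¬ Q (k+1) := fun h => hnot (Or.inr h)
      exact (hdiv2 k).mpr hnq
  · rintro y ⟨hyd, hy1, hy2⟩
    by_contra hne
    rcases lt_or_gt_of_ne hne with hlt | hlt
    · -- y < k : y's strict condition contradicts Q (y+1) from Q k
      have hkne0 : k ≠ 0 := by
        intro h; rw [h] at hlt; exact Nat.not_lt_zero y hlt
      have hQk : Q k := by
        rcases hPk with h0 | h
        · exact absurd h0 hkne0
        · exact h
      have hQy1 : Q (y+1) := hL k hkd hQk (y+1) (Nat.succ_le_succ (Nat.zero_le y)) hlt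
      have hyne : y ≠ d := by
        intro h; rw [h] at hlt; exact absurd hkd (Nat.not_le_of_lt hlt)
      rcases hy2 with h0 | hstrict
      · exact hyne h0
      · exact (hdiv2 y).mp hstrict hQy1
    · -- k < y : contradicts maximality of findGreatest
      have hyne0 : y ≠ 0 := by
        intro h; rw [h] at hlt; exact Nat.not_lt_zero k hlt
      have hQy : Q y := by
        rcases hy1 with h0 | h
        · exact absurd h0 hyne0
        · exact (hdiv y).mp h
      exact Nat.findGreatest_is_greatest hlt hyd (Or.inr hQy)
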